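/- Let ρ₁,ρ₂>0, φ₁,φ₂∈(0,1), and let F : [0,a]×[0,b]×ℝ → ℝ be continuous. If υₙ → υ uniformly on [0,a]×[0,b] with all υₙ and υ taking values in a fixed compact interval, then A(υₙ) → A(υ) uniformly, where A(w)(x,y) = (ρ₁^{1-φ₁} ρ₂^{1-φ₂})/(Γ(φ₁)Γ(φ₂)) ∫_0^x ∫_0^y s^{ρ₁-1} t^{ρ₂-1} (x^{ρ₁}-s^{ρ₁})^{φ₁-1} (y^{ρ₂}-t^{ρ₂})^{φ₂-1} F(s,t,w(s,t)) dt ds. -/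

import Mathlib

open Real MeasureTheory Filter

open intervalIntegral
private lemma ker_hasDeriv {ρ φ : ℝ} (hρ : 0 < ρ) (hφ : 0 < φ) (y : ℝ) :
    ∀ t ∈ Set.Ioo (0:ℝ) y, HasDerivAt (fun t : ℝ => -(y ^ ρ - t ^ ρ) ^ φ / (ρ * φ))
      (t ^ (ρ - 1) * (y ^ ρ - t ^ ρ) ^ (φ - 1)) t := by
  intro t ht
  have h1 : HasDerivAt (fun t : ℝ => t ^ ρ) (ρ * t ^ (ρ - 1)) t :=
    Real.hasDerivAt_rpow_const (Or.inl ht.1.ne')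
  have h2 : HasDerivAt (fun t : ℝ => y ^ ρ - t ^ ρ) (-(ρ * t ^ (ρ - 1))) t := by
    exact h1.const_sub (y ^ ρ)
  have hpos : 0 < y ^ ρ - t ^ ρ :=
    sub_pos.mpr (Real.rpow_lt_rpow ht.1.le ht.2 hρ)
  have h3 : HasDerivAt (fun u : ℝ => u ^ φ) (φ * (y ^ ρ - t ^ ρ) ^ (φ - 1)) (y ^ ρ - t ^ ρ) :=
    Real.hasDerivAt_rpow_const (Or.inl hpos.ne')
  have h4 : HasDerivAt (fun t : ℝ => -(y ^ ρ - t ^ ρ) ^ φ / (ρ * φ))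
      (-(φ * (y ^ ρ - t ^ ρ) ^ (φ - 1) * -(ρ * t ^ (ρ - 1))) / (ρ * φ)) t :=
    (h3.comp t h2).neg.div_const (ρ * φ)
  convert h4 using 1
  rw [eq_div_iff (mul_ne_zero hρ.ne' hφ.ne')]
  ring

private lemma ker_cont {ρ φ : ℝ} (hρ : 0 < ρ) (hφ : 0 < φ) (y : ℝ) :
    ContinuousOn (fun t : ℝ => -(y ^ ρ - t ^ ρ) ^ φ / (ρ * φ)) (Set.Icc 0 y) := by
  apply ContinuousOn.div_const
  apply ContinuousOn.neg
  apply ContinuousOn.rpow_const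
  · exact (continuousOn_const.sub (continuousOn_id.rpow_const fun t _ => Or.inr hρ.le))
  · exact fun t _ => Or.inr hφ.le

private lemma ker_intble {ρ φ : ℝ} (hρ : 0 < ρ) (hφ : 0 < φ) {y : ℝ} (hy : 0 ≤ y) :
    IntervalIntegrable (fun t : ℝ => t ^ (ρ - 1) * (y ^ ρ - t ^ ρ) ^ (φ - 1)) volume 0 y := by
  rw [intervalIntegrable_iff_integrableOn_Ioc_of_le hy]
  exact integrableOn_deriv_of_nonneg (ker_cont hρ hφ y) (ker_hasDeriv hρ hφ y)
    (fun t ht => mul_nonneg (Real.rpow_nonneg ht.1.le _)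
      (Real.rpow_nonneg (sub_nonneg.mpr (Real.rpow_le_rpow ht.1.le ht.2.le hρ.le)) _))

private lemma ker_integral {ρ φ : ℝ} (hρ : 0 < ρ) (hφ : 0 < φ) {y : ℝ} (hy : 0 ≤ y) :
    ∫ t in (0:ℝ)..y, t ^ (ρ - 1) * (y ^ ρ - t ^ ρ) ^ (φ - 1) = y ^ (ρ * φ) / (ρ * φ) := by
  rw [integral_eq_sub_of_hasDerivAt_of_le hy (ker_cont hρ hφ y) (ker_hasDeriv hρ hφ y)
    (ker_intble hρ hφ hy)]
  rw [sub_self, Real.zero_rpow hφ.ne', Real.zero_rpow hρ.ne', sub_zero,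
    Real.rpow_mul hy]
  ring

private lemma measurable_rpow_const' (c : ℝ) : Measurable fun t : ℝ => t ^ c :=
  measurable_of_continuousOn_compl_singleton 0 fun x hx =>
    (Real.continuousAt_rpow_const x c (Or.inl hx)).continuousWithinAt

private lemma ker_measurable (ρ φ y : ℝ) :
    Measurable fun t : ℝ => t ^ (ρ - 1) * (y ^ ρ - t ^ ρ) ^ (φ - 1) :=
  (measurable_rpow_const' (ρ - 1)).mul
    ((measurable_rpow_const' (φ - 1)).comp (measurable_const.sub (measurable_rpow_const' ρ)))

private lemma ker_nonneg {ρ φ : ℝ} (hρ : 0 < ρ) {y t : ℝ} (ht : t ∈ Set.Icc 0 y) :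
    0 ≤ t ^ (ρ - 1) * (y ^ ρ - t ^ ρ) ^ (φ - 1) :=
  mul_nonneg (Real.rpow_nonneg ht.1 _)
    (Real.rpow_nonneg (sub_nonneg.mpr (Real.rpow_le_rpow ht.1 ht.2 hρ.le)) _)

private lemma ker_mul_intble {ρ φ : ℝ} (hρ : 0 < ρ) (hφ : 0 < φ) {y M : ℝ} (hy : 0 ≤ y)
    {h : ℝ → ℝ} (hm : Measurable h) (hb : ∀ t, |h t| ≤ M) :
    IntervalIntegrable (fun t : ℝ => t ^ (ρ - 1) * (y ^ ρ - t ^ ρ) ^ (φ - 1) * h t)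
      volume 0 y := by
  rw [intervalIntegrable_iff_integrableOn_Ioc_of_le hy]
  have hker : IntegrableOn (fun t : ℝ => t ^ (ρ - 1) * (y ^ ρ - t ^ ρ) ^ (φ - 1))
      (Set.Ioc 0 y) volume :=
    (intervalIntegrable_iff_integrableOn_Ioc_of_le hy).mp (ker_intble hρ hφ hy)
  refine Integrable.mono' (hker.const_mul M) ?_ ?_
  · exact ((ker_measurable ρ φ y).mul hm).aestronglyMeasurable
  · refine (ae_restrict_iff' measurableSet_Ioc).mpr (Filter.Eventually.of_forall fun t ht => ?_)
    have h0 : (0:ℝ) ≤ t ^ (ρ - 1) * (y ^ ρ - t ^ ρ) ^ (φ - 1) :=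
      ker_nonneg hρ ⟨ht.1.le, ht.2⟩
    rw [Real.norm_eq_abs, abs_mul, abs_of_nonneg h0]
    calc t ^ (ρ - 1) * (y ^ ρ - t ^ ρ) ^ (φ - 1) * |h t|
        ≤ t ^ (ρ - 1) * (y ^ ρ - t ^ ρ) ^ (φ - 1) * M := by
          exact mul_le_mul_of_nonneg_left (hb t) h0
      _ = M * (t ^ (ρ - 1) * (y ^ ρ - t ^ ρ) ^ (φ - 1)) := by ring

private lemma ker_mul_bound {ρ φ : ℝ} (hρ : 0 < ρ) (hφ : 0 < φ) {y M : ℝ} (hy : 0 ≤ y)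
    {h : ℝ → ℝ} (hm : Measurable h) (hb : ∀ t, |h t| ≤ M) :
    |∫ t in (0:ℝ)..y, t ^ (ρ - 1) * (y ^ ρ - t ^ ρ) ^ (φ - 1) * h t| ≤
      M * (y ^ (ρ * φ) / (ρ * φ)) := by
  have habs := intervalIntegral.abs_integral_le_integral_abs
    (f := fun t : ℝ => t ^ (ρ - 1) * (y ^ ρ - t ^ ρ) ^ (φ - 1) * h t) (μ := volume) hy
  refine habs.trans ?_
  have hint : IntervalIntegrable (fun t : ℝ => |t ^ (ρ - 1) * (y ^ ρ - t ^ ρ) ^ (φ - 1) * h t|)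
      volume 0 y := (ker_mul_intble hρ hφ hy hm hb).abs
  have hint2 : IntervalIntegrable (fun t : ℝ => M * (t ^ (ρ - 1) * (y ^ ρ - t ^ ρ) ^ (φ - 1)))
      volume 0 y := (ker_intble hρ hφ hy).const_mul M
  have hmono := intervalIntegral.integral_mono_on (μ := volume) hy hint hint2
    (fun t ht => by
      have h0 := ker_nonneg hρ (φ := φ) ht
      rw [abs_mul, abs_of_nonneg h0]
      calc t ^ (ρ - 1) * (y ^ ρ - t ^ ρ) ^ (φ - 1) * |h t|
          ≤ t ^ (ρ - 1) * (y ^ ρ - t ^ ρ) ^ (φ - 1) * M :=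
            mul_le_mul_of_nonneg_left (hb t) h0
        _ = M * (t ^ (ρ - 1) * (y ^ ρ - t ^ ρ) ^ (φ - 1)) := by ring)
  refine hmono.trans ?_
  rw [intervalIntegral.integral_const_mul, ker_integral hρ hφ hy]

/-- The mixed Katugampola fractional integral of order `(φ₁, φ₂)` with parameters `(ρ₁, ρ₂)`. -/
noncomputable def mixedKatInt (ρ₁ ρ₂ φ₁ φ₂ : ℝ) (μ : ℝ → ℝ → ℝ) (x y : ℝ) : ℝ :=
  (ρ₁ ^ (1 - φ₁) * ρ₂ ^ (1 - φ₂)) / (Real.Gamma φ₁ * Real.Gamma φ₂) *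
    ∫ s in (0:ℝ)..x, ∫ t in (0:ℝ)..y,
      s ^ (ρ₁ - 1) * t ^ (ρ₂ - 1) * (x ^ ρ₁ - s ^ ρ₁) ^ (φ₁ - 1) *
        (y ^ ρ₂ - t ^ ρ₂) ^ (φ₂ - 1) * μ s t

private lemma key_bound {ρ₁ ρ₂ φ₁ φ₂ a b M δ : ℝ}
    (hρ₁ : 0 < ρ₁) (hρ₂ : 0 < ρ₂) (hφ₁ : φ₁ ∈ Set.Ioo (0:ℝ) 1) (hφ₂ : φ₂ ∈ Set.Ioo (0:ℝ) 1)
    {G G' : ℝ → ℝ → ℝ}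
    (hG : Continuous fun p : ℝ × ℝ => G p.1 p.2) (hG' : Continuous fun p : ℝ × ℝ => G' p.1 p.2)
    (hMG : ∀ s t, |G s t| ≤ M) (hMG' : ∀ s t, |G' s t| ≤ M)
    (hδ : ∀ s t, |G s t - G' s t| ≤ δ)
    {x y : ℝ} (hx : x ∈ Set.Icc 0 a) (hy : y ∈ Set.Icc 0 b) :
    |mixedKatInt ρ₁ ρ₂ φ₁ φ₂ G x y - mixedKatInt ρ₁ ρ₂ φ₁ φ₂ G' x y| ≤
      |ρ₁ ^ (1 - φ₁) * ρ₂ ^ (1 - φ₂) / (Real.Gamma φ₁ * Real.Gamma φ₂)| *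
        (δ * (b ^ (ρ₂ * φ₂) / (ρ₂ * φ₂)) * (a ^ (ρ₁ * φ₁) / (ρ₁ * φ₁))) := by
  have hx0 : (0:ℝ) ≤ x := hx.1
  have hy0 : (0:ℝ) ≤ y := hy.1
  have hδ0 : 0 ≤ δ := (abs_nonneg _).trans (hδ 0 0)
  set HG : ℝ → ℝ := fun s => ∫ t in (0:ℝ)..y,
    t ^ (ρ₂ - 1) * (y ^ ρ₂ - t ^ ρ₂) ^ (φ₂ - 1) * G s t with hHGdef
  set HG' : ℝ → ℝ := fun s => ∫ t in (0:ℝ)..y,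
    t ^ (ρ₂ - 1) * (y ^ ρ₂ - t ^ ρ₂) ^ (φ₂ - 1) * G' s t with hHG'def
  have measGs : ∀ (W : ℝ → ℝ → ℝ), Continuous (fun p : ℝ × ℝ => W p.1 p.2) →
      ∀ s, Measurable fun t => W s t := fun W hW s =>
    (hW.comp (Continuous.prodMk_right s)).measurable
  have inner_eq : ∀ (W : ℝ → ℝ → ℝ) (s : ℝ),
      (∫ t in (0:ℝ)..y, s ^ (ρ₁ - 1) * t ^ (ρ₂ - 1) * (x ^ ρ₁ - s ^ ρ₁) ^ (φ₁ - 1) *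
          (y ^ ρ₂ - t ^ ρ₂) ^ (φ₂ - 1) * W s t) =
        s ^ (ρ₁ - 1) * (x ^ ρ₁ - s ^ ρ₁) ^ (φ₁ - 1) *
          ∫ t in (0:ℝ)..y, t ^ (ρ₂ - 1) * (y ^ ρ₂ - t ^ ρ₂) ^ (φ₂ - 1) * W s t := by
    intro W s
    rw [← intervalIntegral.integral_const_mul]
    exact intervalIntegral.integral_congr fun t _ => by ring
  have measH : ∀ (W : ℝ → ℝ → ℝ), Continuous (fun p : ℝ × ℝ => W p.1 p.2) →
      Measurable (fun s => ∫ t in (0:ℝ)..y,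
        t ^ (ρ₂ - 1) * (y ^ ρ₂ - t ^ ρ₂) ^ (φ₂ - 1) * W s t) := by
    intro W hW
    have : (fun s => ∫ t in (0:ℝ)..y, t ^ (ρ₂ - 1) * (y ^ ρ₂ - t ^ ρ₂) ^ (φ₂ - 1) * W s t) =
        fun s => ∫ t, (fun p : ℝ × ℝ =>
          p.2 ^ (ρ₂ - 1) * (y ^ ρ₂ - p.2 ^ ρ₂) ^ (φ₂ - 1) * W p.1 p.2) (s, t)
          ∂(volume.restrict (Set.Ioc 0 y)) := by
      funext s; rw [intervalIntegral.integral_of_le hy0]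
    rw [this]
    exact (MeasureTheory.StronglyMeasurable.integral_prod_right'
      ((((ker_measurable ρ₂ φ₂ y).comp measurable_snd).mul hW.measurable).stronglyMeasurable)).measurable
  have hMnn : 0 ≤ M := (abs_nonneg _).trans (hMG 0 0)
  have boundHG : ∀ s, |HG s| ≤ M * (y ^ (ρ₂ * φ₂) / (ρ₂ * φ₂)) := fun s =>
    ker_mul_bound hρ₂ hφ₂.1 hy0 (measGs G hG s) (fun t => hMG s t)
  have boundHG' : ∀ s, |HG' s| ≤ M * (y ^ (ρ₂ * φ₂) / (ρ₂ * φ₂)) := fun s =>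
    ker_mul_bound hρ₂ hφ₂.1 hy0 (measGs G' hG' s) (fun t => hMG' s t)
  have intHG : IntervalIntegrable
      (fun s => s ^ (ρ₁ - 1) * (x ^ ρ₁ - s ^ ρ₁) ^ (φ₁ - 1) * HG s) volume 0 x :=
    ker_mul_intble hρ₁ hφ₁.1 hx0 (measH G hG) boundHG
  have intHG' : IntervalIntegrable
      (fun s => s ^ (ρ₁ - 1) * (x ^ ρ₁ - s ^ ρ₁) ^ (φ₁ - 1) * HG' s) volume 0 x :=
    ker_mul_intble hρ₁ hφ₁.1 hx0 (measH G' hG') boundHG'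
  have diffHG : ∀ s, HG s - HG' s = ∫ t in (0:ℝ)..y,
      t ^ (ρ₂ - 1) * (y ^ ρ₂ - t ^ ρ₂) ^ (φ₂ - 1) * (G s t - G' s t) := by
    intro s
    rw [hHGdef, hHG'def]
    rw [← intervalIntegral.integral_sub
      (ker_mul_intble hρ₂ hφ₂.1 hy0 (measGs G hG s) (fun t => hMG s t))
      (ker_mul_intble hρ₂ hφ₂.1 hy0 (measGs G' hG' s) (fun t => hMG' s t))]
    exact intervalIntegral.integral_congr fun t _ => by ring
  have boundDiff : ∀ s, |HG s - HG' s| ≤ δ * (b ^ (ρ₂ * φ₂) / (ρ₂ * φ₂)) := by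
    intro s
    rw [diffHG s]
    refine (ker_mul_bound hρ₂ hφ₂.1 hy0 ((measGs G hG s).sub (measGs G' hG' s))
      (fun t => hδ s t)).trans ?_
    have h1 : y ^ (ρ₂ * φ₂) ≤ b ^ (ρ₂ * φ₂) :=
      Real.rpow_le_rpow hy0 hy.2 (mul_nonneg hρ₂.le hφ₂.1.le)
    have h2 : (0:ℝ) < ρ₂ * φ₂ := mul_pos hρ₂ hφ₂.1
    exact mul_le_mul_of_nonneg_left (by gcongr) hδ0
  have hb0 : (0:ℝ) ≤ b := hy0.trans hy.2
  have final : |∫ s in (0:ℝ)..x,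
      s ^ (ρ₁ - 1) * (x ^ ρ₁ - s ^ ρ₁) ^ (φ₁ - 1) * (HG s - HG' s)| ≤
      δ * (b ^ (ρ₂ * φ₂) / (ρ₂ * φ₂)) * (x ^ (ρ₁ * φ₁) / (ρ₁ * φ₁)) :=
    ker_mul_bound hρ₁ hφ₁.1 hx0 ((measH G hG).sub (measH G' hG')) boundDiff
  have e1 : mixedKatInt ρ₁ ρ₂ φ₁ φ₂ G x y =
      ρ₁ ^ (1 - φ₁) * ρ₂ ^ (1 - φ₂) / (Real.Gamma φ₁ * Real.Gamma φ₂) *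
        ∫ s in (0:ℝ)..x, s ^ (ρ₁ - 1) * (x ^ ρ₁ - s ^ ρ₁) ^ (φ₁ - 1) * HG s := by
    unfold mixedKatInt
    congr 1
    exact intervalIntegral.integral_congr fun s _ => inner_eq G s
  have e1' : mixedKatInt ρ₁ ρ₂ φ₁ φ₂ G' x y =
      ρ₁ ^ (1 - φ₁) * ρ₂ ^ (1 - φ₂) / (Real.Gamma φ₁ * Real.Gamma φ₂) *
        ∫ s in (0:ℝ)..x, s ^ (ρ₁ - 1) * (x ^ ρ₁ - s ^ ρ₁) ^ (φ₁ - 1) * HG' s := by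
    unfold mixedKatInt
    congr 1
    exact intervalIntegral.integral_congr fun s _ => inner_eq G' s
  rw [e1, e1', ← mul_sub, abs_mul]
  have e2 : (∫ s in (0:ℝ)..x, s ^ (ρ₁ - 1) * (x ^ ρ₁ - s ^ ρ₁) ^ (φ₁ - 1) * HG s) -
      (∫ s in (0:ℝ)..x, s ^ (ρ₁ - 1) * (x ^ ρ₁ - s ^ ρ₁) ^ (φ₁ - 1) * HG' s) =
      ∫ s in (0:ℝ)..x, s ^ (ρ₁ - 1) * (x ^ ρ₁ - s ^ ρ₁) ^ (φ₁ - 1) * (HG s - HG' s) := by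
    rw [← intervalIntegral.integral_sub intHG intHG']
    exact intervalIntegral.integral_congr fun s _ => by ring
  rw [e2]
  refine mul_le_mul_of_nonneg_left (final.trans ?_) (abs_nonneg _)
  have hBnn : 0 ≤ δ * (b ^ (ρ₂ * φ₂) / (ρ₂ * φ₂)) :=
    mul_nonneg hδ0 (div_nonneg (Real.rpow_nonneg hb0 _) (mul_pos hρ₂ hφ₂.1).le)
  have hxa : x ^ (ρ₁ * φ₁) ≤ a ^ (ρ₁ * φ₁) :=
    Real.rpow_le_rpow hx0 hx.2 (mul_nonneg hρ₁.le hφ₁.1.le)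
  exact mul_le_mul_of_nonneg_left (by gcongr; exact (mul_pos hρ₁ hφ₁.1).le) hBnn

private lemma mixedKat_congr (ρ₁ ρ₂ φ₁ φ₂ : ℝ) {μ μ' : ℝ → ℝ → ℝ} {x y : ℝ}
    (hx : 0 ≤ x) (hy : 0 ≤ y)
    (h : ∀ s ∈ Set.Icc 0 x, ∀ t ∈ Set.Icc 0 y, μ s t = μ' s t) :
    mixedKatInt ρ₁ ρ₂ φ₁ φ₂ μ x y = mixedKatInt ρ₁ ρ₂ φ₁ φ₂ μ' x y := by
  unfold mixedKatInt
  congr 1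
  apply intervalIntegral.integral_congr
  intro s hs
  rw [Set.uIcc_of_le hx] at hs
  apply intervalIntegral.integral_congr
  intro t ht
  rw [Set.uIcc_of_le hy] at ht
  simp only [h s hs t ht]

theorem operator_continuous_uniform_limit (ρ₁ ρ₂ φ₁ φ₂ a b c d : ℝ)
    (hρ₁ : 0 < ρ₁) (hρ₂ : 0 < ρ₂)
    (hφ₁ : φ₁ ∈ Set.Ioo (0:ℝ) 1) (hφ₂ : φ₂ ∈ Set.Ioo (0:ℝ) 1)
    (F : ℝ → ℝ → ℝ → ℝ)
    (hF : Continuous (fun p : ℝ × ℝ × ℝ => F p.1 p.2.1 p.2.2))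
    (υn : ℕ → ℝ → ℝ → ℝ) (υ : ℝ → ℝ → ℝ)
    (hcont : ∀ n, ContinuousOn (fun p : ℝ × ℝ => υn n p.1 p.2)
      (Set.Icc 0 a ×ˢ Set.Icc 0 b))
    (hcontlim : ContinuousOn (fun p : ℝ × ℝ => υ p.1 p.2) (Set.Icc 0 a ×ˢ Set.Icc 0 b))
    (hrange : ∀ n, ∀ x ∈ Set.Icc (0:ℝ) a, ∀ y ∈ Set.Icc (0:ℝ) b,
      υn n x y ∈ Set.Icc c d)
    (hrangelim : ∀ x ∈ Set.Icc (0:ℝ) a, ∀ y ∈ Set.Icc (0:ℝ) b, υ x y ∈ Set.Icc c d)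
    (hunif : TendstoUniformlyOn (fun n (p : ℝ × ℝ) => υn n p.1 p.2)
      (fun p : ℝ × ℝ => υ p.1 p.2) atTop (Set.Icc 0 a ×ˢ Set.Icc 0 b)) :
    TendstoUniformlyOn
      (fun n (p : ℝ × ℝ) =>
        mixedKatInt ρ₁ ρ₂ φ₁ φ₂ (fun s t => F s t (υn n s t)) p.1 p.2)
      (fun p : ℝ × ℝ =>
        mixedKatInt ρ₁ ρ₂ φ₁ φ₂ (fun s t => F s t (υ s t)) p.1 p.2)
      atTop (Set.Icc 0 a ×ˢ Set.Icc 0 b) := by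
  by_cases hK : 0 ≤ a ∧ 0 ≤ b
  case neg =>
    have hemp : Set.Icc (0:ℝ) a ×ˢ Set.Icc (0:ℝ) b = ∅ := by
      rw [Set.prod_eq_empty_iff]
      rcases not_and_or.mp hK with h | h
      · exact Or.inl (Set.Icc_eq_empty h)
      · exact Or.inr (Set.Icc_eq_empty h)
    rw [hemp]
    exact tendstoUniformlyOn_empty
  obtain ⟨ha, hb⟩ := hK
  set cA : ℝ → ℝ := fun s => max 0 (min s a) with hcA
  set cB : ℝ → ℝ := fun t => max 0 (min t b) with hcB
  have ccA : Continuous cA := continuous_const.max (continuous_id.min continuous_const)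
  have ccB : Continuous cB := continuous_const.max (continuous_id.min continuous_const)
  have memA : ∀ s, cA s ∈ Set.Icc 0 a := fun s =>
    ⟨le_max_left _ _, max_le ha (min_le_right _ _)⟩
  have memB : ∀ t, cB t ∈ Set.Icc 0 b := fun t =>
    ⟨le_max_left _ _, max_le hb (min_le_right _ _)⟩
  have idA : ∀ s ∈ Set.Icc (0:ℝ) a, cA s = s := fun s hs => by
    rw [hcA]; simp only; rw [min_eq_left hs.2, max_eq_right hs.1]
  have idB : ∀ t ∈ Set.Icc (0:ℝ) b, cB t = t := fun t ht => by
    rw [hcB]; simp only; rw [min_eq_left ht.2, max_eq_right ht.1]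
  set K : Set (ℝ × ℝ × ℝ) := Set.Icc 0 a ×ˢ Set.Icc 0 b ×ˢ Set.Icc c d with hKdef
  have hKc : IsCompact K := isCompact_Icc.prod (isCompact_Icc.prod isCompact_Icc)
  obtain ⟨M, hM⟩ := hKc.exists_bound_of_continuousOn hF.continuousOn
  set Gn : ℕ → ℝ → ℝ → ℝ := fun n s t => F (cA s) (cB t) (υn n (cA s) (cB t)) with hGn
  set Gl : ℝ → ℝ → ℝ := fun s t => F (cA s) (cB t) (υ (cA s) (cB t)) with hGl
  have hφn : ∀ n, Continuous (fun p : ℝ × ℝ => υn n (cA p.1) (cB p.2)) := fun n =>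
    (hcont n).comp_continuous ((ccA.comp continuous_fst).prodMk (ccB.comp continuous_snd))
      (fun p => Set.mk_mem_prod (memA p.1) (memB p.2))
  have hφl : Continuous (fun p : ℝ × ℝ => υ (cA p.1) (cB p.2)) :=
    hcontlim.comp_continuous ((ccA.comp continuous_fst).prodMk (ccB.comp continuous_snd))
      (fun p => Set.mk_mem_prod (memA p.1) (memB p.2))
  have hGnc : ∀ n, Continuous (fun p : ℝ × ℝ => Gn n p.1 p.2) := fun n =>
    hF.comp ((ccA.comp continuous_fst).prodMk
      ((ccB.comp continuous_snd).prodMk (hφn n)))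
  have hGlc : Continuous (fun p : ℝ × ℝ => Gl p.1 p.2) :=
    hF.comp ((ccA.comp continuous_fst).prodMk
      ((ccB.comp continuous_snd).prodMk hφl))
  have memn : ∀ n s t, ((cA s, cB t, υn n (cA s) (cB t)) : ℝ × ℝ × ℝ) ∈ K := fun n s t =>
    Set.mk_mem_prod (memA s) (Set.mk_mem_prod (memB t) (hrange n _ (memA s) _ (memB t)))
  have meml : ∀ s t, ((cA s, cB t, υ (cA s) (cB t)) : ℝ × ℝ × ℝ) ∈ K := fun s t =>
    Set.mk_mem_prod (memA s) (Set.mk_mem_prod (memB t) (hrangelim _ (memA s) _ (memB t)))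
  have hMGn : ∀ n s t, |Gn n s t| ≤ M := fun n s t => by
    have := hM _ (memn n s t); rwa [Real.norm_eq_abs] at this
  have hMGl : ∀ s t, |Gl s t| ≤ M := fun s t => by
    have := hM _ (meml s t); rwa [Real.norm_eq_abs] at this
  have hFu : UniformContinuousOn (fun p : ℝ × ℝ × ℝ => F p.1 p.2.1 p.2.2) K :=
    hKc.uniformContinuousOn_of_continuous hF.continuousOn
  rw [Metric.tendstoUniformlyOn_iff]
  intro ε hε
  set C : ℝ := |ρ₁ ^ (1 - φ₁) * ρ₂ ^ (1 - φ₂) / (Real.Gamma φ₁ * Real.Gamma φ₂)| *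
    ((b ^ (ρ₂ * φ₂) / (ρ₂ * φ₂)) * (a ^ (ρ₁ * φ₁) / (ρ₁ * φ₁))) with hC
  have hC0 : 0 ≤ C := mul_nonneg (abs_nonneg _) (mul_nonneg
    (div_nonneg (Real.rpow_nonneg hb _) (mul_pos hρ₂ hφ₂.1).le)
    (div_nonneg (Real.rpow_nonneg ha _) (mul_pos hρ₁ hφ₁.1).le))
  set δ₀ : ℝ := ε / (C + 1) with hδ₀
  have hδ₀pos : 0 < δ₀ := div_pos hε (by linarith)
  obtain ⟨η, hη, hηs⟩ := Metric.uniformContinuousOn_iff.mp hFu δ₀ hδ₀pos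
  filter_upwards [Metric.tendstoUniformlyOn_iff.mp hunif η hη] with n hn
  intro p hp
  obtain ⟨hp1, hp2⟩ := hp
  have congrn : mixedKatInt ρ₁ ρ₂ φ₁ φ₂ (fun s t => F s t (υn n s t)) p.1 p.2 =
      mixedKatInt ρ₁ ρ₂ φ₁ φ₂ (Gn n) p.1 p.2 :=
    mixedKat_congr _ _ _ _ hp1.1 hp2.1 (fun s hs t ht => by
      have hsa : s ∈ Set.Icc 0 a := ⟨hs.1, hs.2.trans hp1.2⟩
      have htb : t ∈ Set.Icc 0 b := ⟨ht.1, ht.2.trans hp2.2⟩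
      rw [hGn]; simp only; rw [idA s hsa, idB t htb])
  have congrl : mixedKatInt ρ₁ ρ₂ φ₁ φ₂ (fun s t => F s t (υ s t)) p.1 p.2 =
      mixedKatInt ρ₁ ρ₂ φ₁ φ₂ Gl p.1 p.2 :=
    mixedKat_congr _ _ _ _ hp1.1 hp2.1 (fun s hs t ht => by
      have hsa : s ∈ Set.Icc 0 a := ⟨hs.1, hs.2.trans hp1.2⟩
      have htb : t ∈ Set.Icc 0 b := ⟨ht.1, ht.2.trans hp2.2⟩
      rw [hGl]; simp only; rw [idA s hsa, idB t htb])
  have hdiff : ∀ s t, |Gl s t - Gn n s t| ≤ δ₀ := by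
    intro s t
    have hd : dist ((cA s, cB t, υ (cA s) (cB t)) : ℝ × ℝ × ℝ)
        (cA s, cB t, υn n (cA s) (cB t)) < η := by
      simp only [Prod.dist_eq, dist_self]
      have := hn (cA s, cB t) (Set.mk_mem_prod (memA s) (memB t))
      simp only [max_lt_iff]
      exact ⟨hη, hη, this⟩
    have := hηs _ (meml s t) _ (memn n s t) hd
    rw [Real.dist_eq] at this
    exact this.le
  rw [Real.dist_eq, congrn, congrl]
  have hbd := key_bound hρ₁ hρ₂ hφ₁ hφ₂ hGlc (hGnc n) hMGl (hMGn n) hdiff hp1 hp2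
  have heq : |ρ₁ ^ (1 - φ₁) * ρ₂ ^ (1 - φ₂) / (Real.Gamma φ₁ * Real.Gamma φ₂)| *
      (δ₀ * (b ^ (ρ₂ * φ₂) / (ρ₂ * φ₂)) * (a ^ (ρ₁ * φ₁) / (ρ₁ * φ₁))) = δ₀ * C := by
    rw [hC]; ring
  refine lt_of_le_of_lt (hbd.trans_eq heq) ?_
  calc δ₀ * C < δ₀ * (C + 1) := by
        exact mul_lt_mul_of_pos_left (lt_add_one C) hδ₀pos
    _ = ε := by rw [hδ₀]; field_simp
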